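/- There exist constants R > 0 and τ₀ > 0 such that for every τ ∈ (0,τ₀), every m ∈ P(𝕋^d), and every continuous ℤ^d-periodic solution u of the discrete Lax–Oleinik equation u(y) + τ L̄(τ,m) = inf_{x∈ℝ^d}(u(x) + 𝓛_{τ,m}(x,y)) (for all y ∈ ℝ^d), the set 𝓝_τ(L_m,u) := {(x,v) ∈ 𝕋^d × ℝ^d : τ L_m(x,v) = u(x+τv) − u(x) + τ L̄(τ,m)} is contained in 𝕋^d × {v ∈ ℝ^d : |v| ≤ R}. -/

import Mathlib

open MeasureTheory Set Filter

noncomputable section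

instance fact_zero_lt_one : Fact ((0:ℝ) < 1) := ⟨one_pos⟩

/-- Euclidean space `ℝ^d`. -/
abbrev Rd (d : ℕ) : Type := EuclideanSpace ℝ (Fin d)

/-- The flat torus `𝕋^d = ℝ^d/ℤ^d`. -/
abbrev Torus (d : ℕ) : Type := Fin d → AddCircle (1:ℝ)

/-- Interpret a bare function `Fin d → ℝ` as a point of `ℝ^d`. -/
def toRd {d : ℕ} (f : Fin d → ℝ) : Rd d := (WithLp.equiv 2 (Fin d → ℝ)).symm f

/-- Canonical projection `π : ℝ^d → 𝕋^d`. -/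
def projT {d : ℕ} (x : Rd d) : Torus d := fun i => (x i : AddCircle (1:ℝ))

/-- A lift `𝕋^d → ℝ^d` with coordinates in `[0,1)`. -/
def liftT {d : ℕ} (x : Torus d) : Rd d := toRd fun i => (AddCircle.equivIco 1 0 (x i)).1

/-- `ℤ^d`-periodicity of a function on `ℝ^d`. -/
def ZPer {d : ℕ} {α : Type*} (φ : Rd d → α) : Prop :=
  ∀ (x : Rd d) (k : Fin d → ℤ), φ (x + toRd fun i => (k i : ℝ)) = φ x

/-- (L1): `∂²L/∂v²(x,v)` is positive definite. -/
def TonelliL1 {d : ℕ} (L : Torus d → Rd d → ℝ) : Prop :=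
  ∀ (x : Torus d) (v w : Rd d), w ≠ 0 →
    0 < iteratedFDeriv ℝ 2 (fun v' => L x v') v ![w, w]

/-- (L2): superlinearity of `L` in `v`. -/
def TonelliL2 {d : ℕ} (L : Torus d → Rd d → ℝ) : Prop :=
  ∀ K : ℝ, 0 < K → ∃ C : ℝ, ∀ (x : Torus d) (v : Rd d), K * ‖v‖ + C ≤ L x v

/-- `L` is `C²` (viewed through the covering `ℝ^d × ℝ^d → 𝕋^d × ℝ^d`). -/
def TonelliC2 {d : ℕ} (L : Torus d → Rd d → ℝ) : Prop :=
  ContDiff ℝ 2 (fun q : Rd d × Rd d => L (projT q.1) q.2)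

/-- Borel probability measures on the torus, with the weak-* topology. -/
abbrev PT (d : ℕ) := ProbabilityMeasure (Torus d)

/-- Integral of `f` against a probability measure. -/
def intPM {X : Type*} [MeasurableSpace X] (μ : ProbabilityMeasure X) (f : X → ℝ) : ℝ :=
  ∫ x, f x ∂(μ : Measure X)

/-- (F1): uniform `C²` bounds for the coupling. -/
def CouplingF1 {d : ℕ} (F : Torus d → PT d → ℝ) (Finf : ℝ) : Prop :=
  0 < Finf ∧ ∀ m : PT d,
    ContDiff ℝ 2 (fun x : Rd d => F (projT x) m) ∧
    (∀ x : Torus d, |F x m| ≤ Finf) ∧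
    (∀ x : Rd d, ‖fderiv ℝ (fun x' : Rd d => F (projT x') m) x‖ ≤ Finf)

/-- The Kantorovich–Rubinstein distance `d₁`. -/
def d1 {d : ℕ} (m₁ m₂ : PT d) : ℝ :=
  sSup { r : ℝ | ∃ g : Torus d → ℝ, LipschitzWith 1 g ∧ r = |intPM m₁ g - intPM m₂ g| }

/-- (F2): continuity of `F` and `D_xF` on `𝕋^d × P(𝕋^d)`. -/
def CouplingF2 {d : ℕ} (F : Torus d → PT d → ℝ) : Prop :=
  Continuous (fun q : Torus d × PT d => F q.1 q.2) ∧
  Continuous (fun q : Rd d × PT d => fderiv ℝ (fun x : Rd d => F (projT x) q.2) q.1)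

/-- (F3): Lipschitz continuity of `F` in the measure variable. -/
def CouplingF3 {d : ℕ} (F : Torus d → PT d → ℝ) (LipF : ℝ) : Prop :=
  0 < LipF ∧ ∀ (x : Torus d) (m₁ m₂ : PT d), |F x m₁ - F x m₂| ≤ LipF * d1 m₁ m₂

/-- The Lagrangian `L_m(x,v) = L(x,v) + F(x,m)` on the torus. -/
def LmT {d : ℕ} (L : Torus d → Rd d → ℝ) (F : Torus d → PT d → ℝ) (m : PT d) :
    Torus d → Rd d → ℝ := fun x v => L x v + F x m

/-- The Lagrangian `L_m` lifted to `ℝ^d`. -/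
def LmR {d : ℕ} (L : Torus d → Rd d → ℝ) (F : Torus d → PT d → ℝ) (m : PT d) :
    Rd d → Rd d → ℝ := fun x v => LmT L F m (projT x) v

/-- A continuous, piecewise `C¹` curve on `[0,t]`. -/
def PiecewiseC1On {d : ℕ} (γ : ℝ → Rd d) (t : ℝ) : Prop :=
  ContinuousOn γ (Icc 0 t) ∧
  ∃ (n : ℕ) (s : Fin (n + 1) → ℝ), StrictMono s ∧ s 0 = 0 ∧ s (Fin.last n) = t ∧
    ∀ i : Fin n, ContDiffOn ℝ 1 γ (Icc (s i.castSucc) (s i.succ))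

/-- The action `∫₀ᵗ Lag(γ, γ̇) ds` of a curve. -/
def curveAction {d : ℕ} (Lag : Rd d → Rd d → ℝ) (t : ℝ) (γ : ℝ → Rd d) : ℝ :=
  ∫ s in Icc (0:ℝ) t, Lag (γ s) (deriv γ s)

/-- The minimal action `h_t(x,y)`. -/
def minAction {d : ℕ} (Lag : Rd d → Rd d → ℝ) (t : ℝ) (x y : Rd d) : ℝ :=
  sInf { a : ℝ | ∃ γ : ℝ → Rd d, PiecewiseC1On γ t ∧ γ 0 = x ∧ γ t = y ∧
    a = curveAction Lag t γ }

/-- The discrete action `𝓛_{τ,m}(x,y) = τ(L(x,(y−x)/τ) + F(x,m))`. -/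
def discAction {d : ℕ} (L : Torus d → Rd d → ℝ) (F : Torus d → PT d → ℝ)
    (τ : ℝ) (m : PT d) (x y : Rd d) : ℝ :=
  τ * (L (projT x) (τ⁻¹ • (y - x)) + F (projT x) m)

/-- `τ`-holonomic probability measures on `𝕋^d × ℝ^d`. -/
def Holonomic {d : ℕ} (τ : ℝ) (μ : ProbabilityMeasure (Torus d × Rd d)) : Prop :=
  ∀ φ : Torus d → ℝ, Continuous φ →
    intPM μ (fun p => φ (p.1 + projT (τ • p.2))) = intPM μ (fun p => φ p.1)

/-- `L̄(τ,m)`: infimum of `∫ L_m dμ` over `τ`-holonomic measures. -/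
def LbarV {d : ℕ} (L : Torus d → Rd d → ℝ) (F : Torus d → PT d → ℝ) (τ : ℝ) (m : PT d) : ℝ :=
  sInf { r : ℝ | ∃ μ : ProbabilityMeasure (Torus d × Rd d), Holonomic τ μ ∧
    r = intPM μ (fun p => LmT L F m p.1 p.2) }

/-- Minimizing `τ`-holonomic measure for `L_m`. -/
def MinHolonomic {d : ℕ} (L : Torus d → Rd d → ℝ) (F : Torus d → PT d → ℝ)
    (τ : ℝ) (m : PT d) (μ : ProbabilityMeasure (Torus d × Rd d)) : Prop :=
  Holonomic τ μ ∧ intPM μ (fun p => LmT L F m p.1 p.2) = LbarV L F τ m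

/-- Support of a measure. -/
def msupport {X : Type*} [TopologicalSpace X] [MeasurableSpace X] (μ : Measure X) : Set X :=
  { x | ∀ U : Set X, IsOpen U → x ∈ U → 0 < μ U }

/-- The pushforward `π♯μ` of a measure on `𝕋^d × ℝ^d` under the canonical projection. -/
def pushFst {d : ℕ} (μ : ProbabilityMeasure (Torus d × Rd d)) : Measure (Torus d) :=
  (μ : Measure (Torus d × Rd d)).map Prod.fst

/-- Closed probability measures on `𝕋^d × ℝ^d`. -/
def IsClosedMeasure {d : ℕ} (μ : ProbabilityMeasure (Torus d × Rd d)) : Prop :=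
  Integrable (fun p : Torus d × Rd d => ‖p.2‖) (μ : Measure (Torus d × Rd d)) ∧
  ∀ φ : Rd d → ℝ, ContDiff ℝ 1 φ → ZPer φ →
    intPM μ (fun p => fderiv ℝ φ (liftT p.1) p.2) = 0

/-- The Mañé critical value `c(m) = −inf{∫ L_m dμ : μ closed}`. -/
def maneC {d : ℕ} (L : Torus d → Rd d → ℝ) (F : Torus d → PT d → ℝ) (m : PT d) : ℝ :=
  - sInf { r : ℝ | ∃ μ : ProbabilityMeasure (Torus d × Rd d), IsClosedMeasure μ ∧
      r = intPM μ (fun p => LmT L F m p.1 p.2) }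

/-- The Hamiltonian `H(x,p) = sup_v (⟨p,v⟩ − L(x,v))`. -/
def Ham {d : ℕ} (L : Torus d → Rd d → ℝ) (x : Torus d) (p : Rd d) : ℝ :=
  sSup { r : ℝ | ∃ v : Rd d, r = inner ℝ p v - L x v }

/-- `∂H/∂p(x,p)`, as the gradient of `H(x,·)`. -/
def HamP {d : ℕ} (L : Torus d → Rd d → ℝ) (x : Torus d) (p : Rd d) : Rd d :=
  gradient (fun q => Ham L x q) p

/-- Viscosity solution of `H(x,Du) = G(x)` for a `ℤ^d`-periodic continuous `u`. -/
def IsViscositySol {d : ℕ} (L : Torus d → Rd d → ℝ) (G : Torus d → ℝ) (u : Rd d → ℝ) : Prop :=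
  (∀ φ : Rd d → ℝ, ContDiff ℝ 1 φ → ∀ x₀ : Rd d,
      IsLocalMax (fun x => u x - φ x) x₀ →
      Ham L (projT x₀) (gradient φ x₀) ≤ G (projT x₀)) ∧
  (∀ ψ : Rd d → ℝ, ContDiff ℝ 1 ψ → ∀ y₀ : Rd d,
      IsLocalMin (fun x => u x - ψ x) y₀ →
      G (projT y₀) ≤ Ham L (projT y₀) (gradient ψ y₀))

section Stmt8Aux

lemma projT_liftT {d : ℕ} (x : Torus d) : projT (liftT x) = x := by
  funext i
  exact (AddCircle.equivIco (1:ℝ) 0).symm_apply_apply (x i)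

lemma norm_le_dim_of_coords {d : ℕ} (x : Rd d) (h : ∀ i, |x i| ≤ 1) : ‖x‖ ≤ d := by
  have h1 : ‖x‖ ≤ Real.sqrt ((d:ℝ) * 1) := by
    rw [EuclideanSpace.norm_eq]
    apply Real.sqrt_le_sqrt
    calc ∑ i, ‖x i‖ ^ 2 ≤ ∑ _i : Fin d, (1:ℝ) := by
          apply Finset.sum_le_sum
          intro i _
          have := h i
          have : ‖x i‖ ≤ 1 := by simpa [Real.norm_eq_abs] using this
          nlinarith [norm_nonneg (x i)]
      _ = (d:ℝ) * 1 := by simp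
  have h2 : Real.sqrt ((d:ℝ) * 1) ≤ d := by
    rw [mul_one]
    have hd2 : (d:ℝ) ≤ (d:ℝ)^2 := by
      rcases Nat.eq_zero_or_pos d with h | h
      · simp [h]
      · have : (1:ℝ) ≤ (d:ℝ) := by exact_mod_cast h
        nlinarith
    calc Real.sqrt (d:ℝ) ≤ Real.sqrt ((d:ℝ)^2) := Real.sqrt_le_sqrt hd2
      _ = (d:ℝ) := Real.sqrt_sq (by positivity)
  linarith

lemma liftT_mem_ball {d : ℕ} (x : Torus d) : ‖liftT x‖ ≤ d := by
  apply norm_le_dim_of_coords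
  intro i
  have h2 := (AddCircle.equivIco (1:ℝ) 0 (x i)).2
  have h3 : (AddCircle.equivIco (1:ℝ) 0 (x i)).1 ∈ Set.Ico (0:ℝ) 1 := by simpa using h2
  show |(AddCircle.equivIco (1:ℝ) 0 (x i)).1| ≤ 1
  rw [abs_of_nonneg h3.1]
  exact le_of_lt h3.2

lemma uZPer_bddBelow {d : ℕ} {u : Rd d → ℝ} (hu : Continuous u) (hper : ZPer u) :
    ∃ mu : ℝ, ∀ x, mu ≤ u x := by
  obtain ⟨mu, hmu⟩ : BddBelow (u '' Metric.closedBall 0 d) :=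
    ((isCompact_closedBall _ _).image hu).bddBelow
  refine ⟨mu, fun x => ?_⟩
  set x' : Rd d := toRd (fun i => Int.fract (x i)) with hx'
  have hxeq : x' + (toRd fun i => ((⌊x i⌋ : ℤ) : ℝ)) = x := by
    ext i
    show Int.fract (x i) + ((⌊x i⌋ : ℤ) : ℝ) = x i
    rw [Int.fract]; ring
  have hux : u x = u x' := by
    conv_lhs => rw [← hxeq]
    exact hper x' (fun i => ⌊x i⌋)
  rw [hux]
  apply hmu
  refine ⟨x', ?_, rfl⟩
  rw [Metric.mem_closedBall, dist_zero_right]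
  apply norm_le_dim_of_coords
  intro i
  show |Int.fract (x i)| ≤ 1
  rw [abs_of_nonneg (Int.fract_nonneg _)]
  exact le_of_lt (Int.fract_lt_one _)

end Stmt8Aux

/-- the set `𝓝_τ(L_m,u)` is contained in `𝕋^d × B_R`, uniformly in
`τ ∈ (0,τ₀)` and `m`. -/
theorem stmt8
    {d : ℕ} (hd : 1 ≤ d)
    (L : Torus d → Rd d → ℝ) (hLC2 : TonelliC2 L) (hL1 : TonelliL1 L) (hL2 : TonelliL2 L)
    (F : Torus d → PT d → ℝ) (Finf : ℝ) (hF1 : CouplingF1 F Finf) :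
    ∃ R τ₀ : ℝ, 0 < R ∧ 0 < τ₀ ∧
      ∀ τ : ℝ, τ ∈ Ioo 0 τ₀ → ∀ (m : PT d) (u : Rd d → ℝ),
        Continuous u → ZPer u →
        (∀ y : Rd d, u y + τ * LbarV L F τ m =
          sInf { r : ℝ | ∃ x : Rd d, r = u x + discAction L F τ m x y }) →
        ∀ x v : Rd d,
          τ * LmR L F m x v = u (x + τ • v) - u x + τ * LbarV L F τ m → ‖v‖ ≤ R := by

  classical
  have hgcont : Continuous (fun q : Rd d × Rd d => L (projT q.1) q.2) := hLC2.continuous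
  set Kset : Set (Rd d × Rd d) :=
    Metric.closedBall 0 d ×ˢ Metric.closedBall 0 1 with hKset
  have hKc : IsCompact Kset := (isCompact_closedBall _ _).prod (isCompact_closedBall _ _)
  obtain ⟨M₁, hM₁⟩ : ∃ M, ∀ q ∈ Kset, L (projT q.1) q.2 ≤ M := by
    rcases (hKc.image hgcont).bddAbove with ⟨M, hM⟩
    exact ⟨M, fun q hq => hM ⟨q, hq, rfl⟩⟩
  have hM₁' : ∀ (z : Torus d) (w : Rd d), ‖w‖ ≤ 1 → L z w ≤ M₁ := by
    intro z w hw
    have hmem : (liftT z, w) ∈ Kset := by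
      constructor
      · simpa [Metric.mem_closedBall, dist_zero_right] using liftT_mem_ball z
      · simpa [Metric.mem_closedBall, dist_zero_right] using hw
    have := hM₁ (liftT z, w) hmem
    rwa [projT_liftT] at this
  obtain ⟨C₁, hC₁⟩ := hL2 1 one_pos
  have hC₁' : ∀ (z : Torus d) (w : Rd d), C₁ ≤ L z w := by
    intro z w
    have := hC₁ z w
    nlinarith [norm_nonneg w]
  have hFinf : 0 < Finf := hF1.1
  set B₀ : ℝ := min (C₁ - Finf) 0 with hB₀
  set A₂ : ℝ := M₁ + Finf - B₀ with hA₂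
  have hC₁M : C₁ ≤ M₁ := le_trans (hC₁' (fun _ => 0) 0) (hM₁' _ 0 (by simp))
  have hB₀le : B₀ ≤ C₁ - Finf := min_le_left _ _
  have hB₀0 : B₀ ≤ 0 := min_le_right _ _
  have hA₂pos : 0 < A₂ := by rw [hA₂]; linarith
  obtain ⟨CK, hCK⟩ := hL2 (A₂ + 1) (by linarith)
  refine ⟨max (A₂ + (M₁ + Finf) + Finf - CK) 1, 1,
    lt_of_lt_of_le one_pos (le_max_right _ _), one_pos, ?_⟩
  rintro τ ⟨hτ0, hτ1⟩ m u hu hper hLO x v heq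
  set Lb := LbarV L F τ m with hLbdef
  obtain ⟨-, hFb, -⟩ := hF1.2 m
  have hFub : ∀ y : Torus d, F y m ≤ Finf := fun y => (abs_le.mp (hFb y)).2
  have hFlb : ∀ y : Torus d, -Finf ≤ F y m := fun y => (abs_le.mp (hFb y)).1
  obtain ⟨mu, hmu⟩ := uZPer_bddBelow hu hper
  -- the infimum sets are bounded below
  have hdiscLB : ∀ z y : Rd d, τ * (C₁ - Finf) ≤ discAction L F τ m z y := by
    intro z y
    have h1 := hC₁' (projT z) (τ⁻¹ • (y - z))
    have h2 := hFlb (projT z)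
    unfold discAction
    nlinarith
  have hbdd : ∀ y : Rd d,
      BddBelow {r : ℝ | ∃ z, r = u z + discAction L F τ m z y} := by
    intro y
    refine ⟨mu + τ * (C₁ - Finf), ?_⟩
    rintro r ⟨z, rfl⟩
    exact add_le_add (hmu z) (hdiscLB z y)
  -- one-step inequality from the Lax–Oleinik equation
  have hstep : ∀ z y : Rd d, u y + τ * Lb ≤ u z + discAction L F τ m z y := by
    intro z y
    rw [hLO y]
    exact csInf_le (hbdd y) ⟨z, rfl⟩
  -- discrete action upper bound for short steps
  have hdiscUB : ∀ z y : Rd d, ‖y - z‖ ≤ τ →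
      discAction L F τ m z y ≤ τ * (M₁ + Finf) := by
    intro z y h
    have hn : ‖τ⁻¹ • (y - z)‖ ≤ 1 := by
      rw [norm_smul, norm_inv, Real.norm_of_nonneg hτ0.le]
      have h2 : τ⁻¹ * ‖y - z‖ ≤ τ⁻¹ * τ :=
        mul_le_mul_of_nonneg_left h (by positivity)
      rwa [inv_mul_cancel₀ (ne_of_gt hτ0)] at h2
    have h1 := hM₁' (projT z) _ hn
    have h2 := hFub (projT z)
    unfold discAction
    nlinarith
  -- upper bound on Lb
  have hLbub : Lb ≤ M₁ + Finf := by
    have h1 := hstep 0 0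
    have h2 := hdiscUB 0 0 (by simpa using hτ0.le)
    have h3 : τ * Lb ≤ τ * (M₁ + Finf) := by linarith
    exact le_of_mul_le_mul_left (by linarith) hτ0
  -- lower bound on Lb
  have hLblb : B₀ ≤ Lb := by
    rw [hLbdef]
    unfold LbarV
    rcases Set.eq_empty_or_nonempty
        {r : ℝ | ∃ μ : ProbabilityMeasure (Torus d × Rd d), Holonomic τ μ ∧
          r = intPM μ (fun p => LmT L F m p.1 p.2)} with he | hne
    · rw [he, Real.sInf_empty]; exact hB₀0
    · apply le_csInf hne
      rintro r ⟨μ, -, rfl⟩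
      unfold intPM
      by_cases hInt : Integrable (fun p : Torus d × Rd d => LmT L F m p.1 p.2)
          (μ : MeasureTheory.Measure (Torus d × Rd d))
      · have hpt : ∀ p : Torus d × Rd d, C₁ - Finf ≤ LmT L F m p.1 p.2 := by
          intro p
          have := hC₁' p.1 p.2
          have := hFlb p.1
          unfold LmT
          linarith
        have : (C₁ - Finf) ≤ ∫ p, LmT L F m p.1 p.2 ∂(μ : MeasureTheory.Measure (Torus d × Rd d)) := by
          have := MeasureTheory.integral_mono (MeasureTheory.integrable_const (C₁ - Finf)) hInt
            (fun p => hpt p)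
          simpa using this
        linarith
      · rw [MeasureTheory.integral_undef hInt]
        exact hB₀0
  -- chain/oscillation estimate
  have hosc : 0 ≤ M₁ + Finf - Lb := by linarith
  have hchain : ∀ p q : Rd d, u q - u p ≤ (‖q - p‖ + τ) * (M₁ + Finf - Lb) := by
    intro p q
    set D : ℝ := ‖q - p‖ with hD
    set N : ℕ := ⌈D / τ⌉₊ with hN
    by_cases hqp : q = p
    · subst hqp
      simp only [sub_self, norm_zero] at hD ⊢
      nlinarith
    · have hDpos : 0 < D := by
        rw [hD]; simpa [sub_eq_zero] using hqp
      have hNpos : 0 < N := by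
        rw [hN, Nat.ceil_pos]
        positivity
      have hNR : (0:ℝ) < (N:ℝ) := by exact_mod_cast hNpos
      have hDN : D ≤ (N:ℝ) * τ := by
        have := Nat.le_ceil (D / τ)
        rw [← hN] at this
        calc D = D / τ * τ := by field_simp
          _ ≤ (N:ℝ) * τ := by nlinarith
      have hNτ : (N:ℝ) * τ ≤ D + τ := by
        have := Nat.ceil_lt_add_one (show (0:ℝ) ≤ D / τ by positivity)
        rw [← hN] at this
        have h2 : (N:ℝ) * τ < (D / τ + 1) * τ := mul_lt_mul_of_pos_right this hτ0
        have h3 : (D / τ + 1) * τ = D + τ := by field_simp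
        linarith
      set z : ℕ → Rd d := fun j => p + ((j : ℝ) / (N:ℝ)) • (q - p) with hz
      have hkey : ∀ j : ℕ, j ≤ N → u (z j) ≤ u p + (j : ℝ) * (τ * (M₁ + Finf - Lb)) := by
        intro j
        induction j with
        | zero => intro _; simp [hz]
        | succ k ih =>
          intro hk
          have hk' : k ≤ N := Nat.le_of_succ_le hk
          have ihk := ih hk'
          have hdiff : z (k+1) - z k = ((1:ℝ) / (N:ℝ)) • (q - p) := by
            rw [hz]
            simp only
            rw [add_sub_add_left_eq_sub, ← sub_smul]
            congr 1
            push_cast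
            field_simp
            ring
          have hnd : ‖z (k+1) - z k‖ ≤ τ := by
            rw [hdiff, norm_smul]
            rw [Real.norm_of_nonneg (by positivity)]
            rw [← hD]
            rw [div_mul_eq_mul_div, one_mul, div_le_iff₀ hNR]
            linarith [hDN]
          have h1 := hstep (z k) (z (k+1))
          have h2 := hdiscUB (z k) (z (k+1)) hnd
          have : u (z (k+1)) ≤ u (z k) + τ * (M₁ + Finf - Lb) := by linarith
          calc u (z (k+1)) ≤ u (z k) + τ * (M₁ + Finf - Lb) := this
            _ ≤ u p + (k : ℝ) * (τ * (M₁ + Finf - Lb)) + τ * (M₁ + Finf - Lb) := by linarith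
            _ = u p + ((k+1 : ℕ) : ℝ) * (τ * (M₁ + Finf - Lb)) := by push_cast; ring
      have hzN : z N = q := by
        rw [hz]
        simp only
        rw [div_self (ne_of_gt hNR), one_smul]
        abel
      have := hkey N le_rfl
      rw [hzN] at this
      have hmul : (N:ℝ) * (τ * (M₁ + Finf - Lb)) ≤ (D + τ) * (M₁ + Finf - Lb) := by
        rw [← mul_assoc]
        exact mul_le_mul_of_nonneg_right hNτ hosc
      linarith
  -- final assembly
  have hlow : τ * ((A₂ + 1) * ‖v‖ + CK - Finf) ≤ τ * LmR L F m x v := by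
    apply mul_le_mul_of_nonneg_left _ hτ0.le
    have h1 := hCK (projT x) v
    have h2 := hFlb (projT x)
    unfold LmR LmT
    linarith
  have hup : u (x + τ • v) - u x ≤ (τ * ‖v‖ + τ) * (M₁ + Finf - Lb) := by
    have := hchain x (x + τ • v)
    have hns : ‖x + τ • v - x‖ = τ * ‖v‖ := by
      rw [add_sub_cancel_left, norm_smul, Real.norm_of_nonneg hτ0.le]
    rw [hns] at this
    exact this
  have hA₂b : M₁ + Finf - Lb ≤ A₂ := by rw [hA₂]; linarith
  have hup2 : u (x + τ • v) - u x ≤ (τ * ‖v‖ + τ) * A₂ := by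
    have h0 : 0 ≤ τ * ‖v‖ + τ := by positivity
    calc u (x + τ • v) - u x ≤ (τ * ‖v‖ + τ) * (M₁ + Finf - Lb) := hup
      _ ≤ (τ * ‖v‖ + τ) * A₂ := mul_le_mul_of_nonneg_left hA₂b h0
  have hfin : τ * ((A₂ + 1) * ‖v‖ + CK - Finf) ≤ (τ * ‖v‖ + τ) * A₂ + τ * (M₁ + Finf) := by
    have hLbu : τ * Lb ≤ τ * (M₁ + Finf) := mul_le_mul_of_nonneg_left hLbub hτ0.le
    calc τ * ((A₂ + 1) * ‖v‖ + CK - Finf) ≤ τ * LmR L F m x v := hlow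
      _ = u (x + τ • v) - u x + τ * Lb := heq
      _ ≤ (τ * ‖v‖ + τ) * A₂ + τ * (M₁ + Finf) := by linarith
  have hdiv : (A₂ + 1) * ‖v‖ + CK - Finf ≤ (‖v‖ + 1) * A₂ + (M₁ + Finf) := by
    have h3 : (τ * ‖v‖ + τ) * A₂ + τ * (M₁ + Finf) = τ * ((‖v‖ + 1) * A₂ + (M₁ + Finf)) := by
      ring
    rw [h3] at hfin
    exact le_of_mul_le_mul_left hfin hτ0
  have hexp : (A₂ + 1) * ‖v‖ + CK - Finf - ((‖v‖ + 1) * A₂ + (M₁ + Finf))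
      = ‖v‖ - (A₂ + (M₁ + Finf) + Finf - CK) := by ring
  have hfin2 : ‖v‖ ≤ A₂ + (M₁ + Finf) + Finf - CK := by linarith [hdiv, hexp.le, hexp.ge]
  exact le_trans hfin2 (le_max_left _ _)
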